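/- Fix a real constant α. Let R(J, v) be a smooth real-valued function on an open subset of {(J, v) : J > 0} ⊆ ℝ², and define M(ξ, v) := R(e^{ξ}, v) − 2ξ on the corresponding open set. Then R satisfies 4 (e^{R})_{JJ} + R_{vv} + 2 sin α · (J R_J)_v + J (J R_J)_J = 0 if and only if M satisfies M_{vv} + 2 sin α · M_{vξ} + M_{ξξ} + 4 e^{M} (M_{ξξ} + (M_ξ)² + 3 M_ξ + 2) = 0. -/

import Mathlib

noncomputable section

/-- Partial derivatives of a function of two real variables. -/
def p1 (H : ℝ → ℝ → ℝ) : ℝ → ℝ → ℝ := fun a b => deriv (fun s => H s b) a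
def p2 (H : ℝ → ℝ → ℝ) : ℝ → ℝ → ℝ := fun a b => deriv (fun s => H a s) b

/-- With M(ξ, v) := R(e^ξ, v) − 2ξ, the equation
4 (e^R)_{JJ} + R_{vv} + 2 sin α (J R_J)_v + J (J R_J)_J = 0 for R on U is equivalent to
M_{vv} + 2 sin α M_{vξ} + M_{ξξ} + 4 e^M (M_{ξξ} + M_ξ² + 3 M_ξ + 2) = 0 on the
corresponding set. -/
theorem R_equation_iff_M_equation (α : ℝ) (U : Set (ℝ × ℝ)) (hU : IsOpen U)
    (hUpos : ∀ p ∈ U, 0 < p.1)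
    (R : ℝ → ℝ → ℝ)
    (hR : ContDiffOn ℝ (⊤ : ℕ∞) (fun p : ℝ × ℝ => R p.1 p.2) U)
    (M : ℝ → ℝ → ℝ)
    (hM : ∀ ξ v : ℝ, M ξ v = R (Real.exp ξ) v - 2 * ξ) :
    (∀ J v : ℝ, (J, v) ∈ U →
        4 * deriv (fun s => deriv (fun r => Real.exp (R r v)) s) J
          + p2 (p2 R) J v
          + 2 * Real.sin α * deriv (fun s => J * p1 R J s) v
          + J * deriv (fun s => s * p1 R s v) J = 0)
    ↔ (∀ ξ v : ℝ, (Real.exp ξ, v) ∈ U →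
        p2 (p2 M) ξ v + 2 * Real.sin α * p1 (p2 M) ξ v + p1 (p1 M) ξ v
          + 4 * Real.exp (M ξ v)
            * (p1 (p1 M) ξ v + (p1 M ξ v) ^ 2 + 3 * p1 M ξ v + 2) = 0) := by
  classical
  set f : ℝ × ℝ → ℝ := fun p => R p.1 p.2 with hfdef
  have hf : ContDiffOn ℝ (⊤ : ℕ∞) f U := hR
  obtain ⟨hfd, hg⟩ := (contDiffOn_infty_iff_fderiv_of_isOpen hU).1 hf
  set g : ℝ × ℝ → (ℝ × ℝ →L[ℝ] ℝ) := fderiv ℝ f with hgdef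
  obtain ⟨hgd, -⟩ := (contDiffOn_infty_iff_fderiv_of_isOpen hU).1 hg
  have Hf : ∀ p ∈ U, HasFDerivAt f (g p) p := fun p hp =>
    (hfd.differentiableAt (hU.mem_nhds hp)).hasFDerivAt
  have Hg : ∀ p ∈ U, HasFDerivAt g (fderiv ℝ g p) p := fun p hp =>
    (hgd.differentiableAt (hU.mem_nhds hp)).hasFDerivAt
  set A : ℝ × ℝ → ℝ := fun p => g p ((1:ℝ), (0:ℝ)) with hAdef
  set B : ℝ × ℝ → ℝ := fun p => g p ((0:ℝ), (1:ℝ)) with hBdef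
  have HA : ∀ p ∈ U, HasFDerivAt A
      ((ContinuousLinearMap.apply ℝ ℝ ((1:ℝ),(0:ℝ))).comp (fderiv ℝ g p)) p := fun p hp =>
    (ContinuousLinearMap.apply ℝ ℝ ((1:ℝ),(0:ℝ))).hasFDerivAt.comp p (Hg p hp)
  have HB : ∀ p ∈ U, HasFDerivAt B
      ((ContinuousLinearMap.apply ℝ ℝ ((0:ℝ),(1:ℝ))).comp (fderiv ℝ g p)) p := fun p hp =>
    (ContinuousLinearMap.apply ℝ ℝ ((0:ℝ),(1:ℝ))).hasFDerivAt.comp p (Hg p hp)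
  -- slice derivatives of R
  have h1R : ∀ a b : ℝ, (a, b) ∈ U → HasDerivAt (fun s => R s b) (A (a, b)) a := by
    intro a b hab
    have hc : HasDerivAt (fun s : ℝ => ((s, b) : ℝ × ℝ)) ((1:ℝ), (0:ℝ)) a :=
      (hasDerivAt_id a).prodMk (hasDerivAt_const a b)
    simpa [Function.comp_def] using (Hf (a, b) hab).comp_hasDerivAt a hc
  have h2R : ∀ a b : ℝ, (a, b) ∈ U → HasDerivAt (fun s => R a s) (B (a, b)) b := by
    intro a b hab
    have hc : HasDerivAt (fun s : ℝ => ((a, s) : ℝ × ℝ)) ((0:ℝ), (1:ℝ)) b :=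
      (hasDerivAt_const b a).prodMk (hasDerivAt_id b)
    simpa [Function.comp_def] using (Hf (a, b) hab).comp_hasDerivAt b hc
  have hp1 : ∀ a b : ℝ, (a, b) ∈ U → p1 R a b = A (a, b) := fun a b hab =>
    (h1R a b hab).deriv
  have hp2 : ∀ a b : ℝ, (a, b) ∈ U → p2 R a b = B (a, b) := fun a b hab =>
    (h2R a b hab).deriv
  -- p2 M globally
  have hMp2 : ∀ ξ v : ℝ, p2 M ξ v = p2 R (Real.exp ξ) v := by
    intro ξ v
    have hfun : (fun s => M ξ s) = fun s => R (Real.exp ξ) s - 2 * ξ :=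
      funext fun s => hM ξ s
    simp only [p2, hfun, deriv_sub_const]
  -- the key pointwise identity
  have key : ∀ ξ v : ℝ, (Real.exp ξ, v) ∈ U →
      4 * deriv (fun s => deriv (fun r => Real.exp (R r v)) s) (Real.exp ξ)
        + p2 (p2 R) (Real.exp ξ) v
        + 2 * Real.sin α * deriv (fun s => Real.exp ξ * p1 R (Real.exp ξ) s) v
        + Real.exp ξ * deriv (fun s => s * p1 R s v) (Real.exp ξ)
      = p2 (p2 M) ξ v + 2 * Real.sin α * p1 (p2 M) ξ v + p1 (p1 M) ξ v
        + 4 * Real.exp (M ξ v)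
          * (p1 (p1 M) ξ v + (p1 M ξ v) ^ 2 + 3 * p1 M ξ v + 2) := by
    intro ξ v hp
    have hpU : ((Real.exp ξ, v) : ℝ × ℝ) ∈ U := hp
    set p : ℝ × ℝ := (Real.exp ξ, v) with hpdef
    set e : ℝ := Real.exp ξ with hedef
    -- directional second derivatives
    set a1 : ℝ := fderiv ℝ g p ((1:ℝ),(0:ℝ)) ((1:ℝ),(0:ℝ)) with ha1
    set a2 : ℝ := fderiv ℝ g p ((0:ℝ),(1:ℝ)) ((1:ℝ),(0:ℝ)) with ha2
    set b1 : ℝ := fderiv ℝ g p ((1:ℝ),(0:ℝ)) ((0:ℝ),(1:ℝ)) with hb1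
    have hsymm : a2 = b1 := by
      have hev : ∀ᶠ q in nhds p, HasFDerivAt f (g q) q := by
        filter_upwards [hU.mem_nhds hpU] with q hq using Hf q hq
      exact second_derivative_symmetric_of_eventually hev (Hg p hpU) _ _
    -- eventual memberships
    have hev1 : ∀ᶠ s in nhds e, ((s, v) : ℝ × ℝ) ∈ U := by
      have hc : ContinuousAt (fun s : ℝ => ((s, v) : ℝ × ℝ)) e := by fun_prop
      exact hc.eventually_mem (hU.mem_nhds hpU)
    have hev2 : ∀ᶠ s in nhds v, ((e, s) : ℝ × ℝ) ∈ U := by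
      have hc : ContinuousAt (fun s : ℝ => ((e, s) : ℝ × ℝ)) v := by fun_prop
      exact hc.eventually_mem (hU.mem_nhds hpU)
    have heve : ∀ᶠ t in nhds ξ, ((Real.exp t, v) : ℝ × ℝ) ∈ U := by
      have hc : ContinuousAt (fun t : ℝ => ((Real.exp t, v) : ℝ × ℝ)) ξ := by fun_prop
      exact hc.eventually_mem (hU.mem_nhds hpU)
    -- helper: scalar extraction
    have hsmul : ∀ (L : ℝ × ℝ →L[ℝ] ℝ) (c : ℝ), L (c, 0) = c * L (1, 0) := by
      intro L c
      have h : ((c, (0:ℝ)) : ℝ × ℝ) = c • ((1:ℝ), (0:ℝ)) := by simp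
      rw [h, map_smul, smul_eq_mul]
    have hsmul' : ∀ (L : ℝ × ℝ →L[ℝ] (ℝ × ℝ →L[ℝ] ℝ)) (c : ℝ) (w : ℝ × ℝ),
        L (c, 0) w = c * L (1, 0) w := by
      intro L c w
      have h : ((c, (0:ℝ)) : ℝ × ℝ) = c • ((1:ℝ), (0:ℝ)) := by simp
      rw [h, map_smul, ContinuousLinearMap.smul_apply, smul_eq_mul]
    -- slice derivatives of A and B at p
    have hcurve1 : HasDerivAt (fun s : ℝ => ((s, v) : ℝ × ℝ)) ((1:ℝ),(0:ℝ)) e :=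
      (hasDerivAt_id e).prodMk (hasDerivAt_const e v)
    have hcurve2 : HasDerivAt (fun s : ℝ => ((e, s) : ℝ × ℝ)) ((0:ℝ),(1:ℝ)) v :=
      (hasDerivAt_const v e).prodMk (hasDerivAt_id v)
    have hcurvee : ∀ t : ℝ, HasDerivAt (fun t : ℝ => ((Real.exp t, v) : ℝ × ℝ))
        ((Real.exp t, (0:ℝ)) : ℝ × ℝ) t := fun t =>
      (Real.hasDerivAt_exp t).prodMk (hasDerivAt_const t v)
    have hA1 : HasDerivAt (fun s => A (s, v)) a1 e := by
      simpa [Function.comp_def, ha1] using (HA p hpU).comp_hasDerivAt e hcurve1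
    have hA2 : HasDerivAt (fun s => A (e, s)) a2 v := by
      simpa [Function.comp_def, ha2] using (HA p hpU).comp_hasDerivAt v hcurve2
    have hBe : HasDerivAt (fun t => B (Real.exp t, v)) (e * b1) ξ := by
      have h := (HB p hpU).comp_hasDerivAt ξ (hcurvee ξ)
      simp only [Function.comp_def, ContinuousLinearMap.comp_apply,
        ContinuousLinearMap.apply_apply] at h
      rw [hsmul' (fderiv ℝ g p) (Real.exp ξ)] at h
      simpa [hb1, ← hedef] using h
    have hAe : HasDerivAt (fun t => A (Real.exp t, v)) (e * a1) ξ := by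
      have h := (HA p hpU).comp_hasDerivAt ξ (hcurvee ξ)
      simp only [Function.comp_def, ContinuousLinearMap.comp_apply,
        ContinuousLinearMap.apply_apply] at h
      rw [hsmul' (fderiv ℝ g p) (Real.exp ξ)] at h
      simpa [ha1, ← hedef] using h
    ---- term 1 : 4 (e^R)_JJ
    have hinner : (fun s => deriv (fun r => Real.exp (R r v)) s)
        =ᶠ[nhds e] fun s => Real.exp (R s v) * A (s, v) := by
      filter_upwards [hev1] with s hs
      exact ((h1R s v hs).exp).deriv
    have hterm1 : deriv (fun s => deriv (fun r => Real.exp (R r v)) s) e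
        = Real.exp (R e v) * A p * A p + Real.exp (R e v) * a1 := by
      rw [hinner.deriv_eq]
      exact (((h1R e v hpU).exp).mul hA1).deriv
    ---- term 3 : cross term
    have hterm3 : deriv (fun s => e * p1 R e s) v = e * a2 := by
      have hevq : (fun s => e * p1 R e s) =ᶠ[nhds v] fun s => e * A (e, s) := by
        filter_upwards [hev2] with s hs
        rw [hp1 e s hs]
      rw [hevq.deriv_eq]
      exact (hA2.const_mul e).deriv
    ---- term 4 : J (J R_J)_J
    have hterm4 : deriv (fun s => s * p1 R s v) e = A p + e * a1 := by
      have hevq : (fun s => s * p1 R s v) =ᶠ[nhds e] fun s => s * A (s, v) := by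
        filter_upwards [hev1] with s hs
        rw [hp1 s v hs]
      rw [hevq.deriv_eq]
      have := (hasDerivAt_id' e).mul hA1
      simpa [Pi.mul_def] using this.deriv
    ---- M-side first partial in ξ
    have hMξ : ∀ t : ℝ, ((Real.exp t, v) : ℝ × ℝ) ∈ U →
        HasDerivAt (fun s => M s v) (Real.exp t * A (Real.exp t, v) - 2) t := by
      intro t ht
      have h1 : HasDerivAt (fun s => f (Real.exp s, v))
          (g (Real.exp t, v) ((Real.exp t, (0:ℝ)) : ℝ × ℝ)) t :=
        by have := (Hf (Real.exp t, v) ht).comp_hasDerivAt t (hcurvee t); exact this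
      rw [hsmul (g (Real.exp t, v)) (Real.exp t)] at h1
      have h3 : HasDerivAt (fun s : ℝ => 2 * s) 2 t := by
        simpa using (hasDerivAt_id t).const_mul (2:ℝ)
      have h4 := h1.sub h3
      have hfun : (fun s => M s v) = fun s => f (Real.exp s, v) - 2 * s :=
        funext fun s => hM s v
      rw [hfun]
      exact h4
    have hp1M : ∀ t : ℝ, ((Real.exp t, v) : ℝ × ℝ) ∈ U →
        p1 M t v = Real.exp t * A (Real.exp t, v) - 2 := fun t ht => (hMξ t ht).deriv
    have hp1Mp : p1 M ξ v = e * A p - 2 := hp1M ξ hpU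
    ---- M-side second partial in ξ
    have hp1p1M : p1 (p1 M) ξ v = e * A p + e * (e * a1) := by
      have hevq : (fun t => p1 M t v) =ᶠ[nhds ξ]
          fun t => Real.exp t * A (Real.exp t, v) - 2 := by
        filter_upwards [heve] with t ht
        exact hp1M t ht
      have hd : HasDerivAt (fun t => Real.exp t * A (Real.exp t, v) - 2)
          (Real.exp ξ * A (Real.exp ξ, v) + Real.exp ξ * (e * a1)) ξ :=
        ((Real.hasDerivAt_exp ξ).mul hAe).sub_const 2
      have : p1 (p1 M) ξ v = Real.exp ξ * A (Real.exp ξ, v) + Real.exp ξ * (e * a1) := by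
        show deriv (fun t => p1 M t v) ξ = _
        rw [hevq.deriv_eq]
        exact hd.deriv
      simpa [← hedef, ← hpdef] using this
    ---- M-side mixed partial
    have hp1p2M : p1 (p2 M) ξ v = e * b1 := by
      have hevq : (fun t => p2 M t v) =ᶠ[nhds ξ] fun t => B (Real.exp t, v) := by
        filter_upwards [heve] with t ht
        rw [hMp2 t v, hp2 _ v ht]
      show deriv (fun t => p2 M t v) ξ = e * b1
      rw [hevq.deriv_eq]
      exact hBe.deriv
    ---- M-side vv partial
    have hp2p2M : p2 (p2 M) ξ v = p2 (p2 R) e v := by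
      have hfun : (fun s => p2 M ξ s) = fun s => p2 R e s := funext fun s => hMp2 ξ s
      show deriv (fun s => p2 M ξ s) v = deriv (fun s => p2 R e s) v
      rw [hfun]
    ---- exponential of M
    have hexpM : Real.exp (M ξ v) = Real.exp (R e v) / (e * e) := by
      rw [hM ξ v, Real.exp_sub, two_mul, Real.exp_add, hedef]
    have hepos : (0:ℝ) < e := Real.exp_pos ξ
    -- now substitute everything
    rw [hterm1, hterm3, hterm4, hp1p1M, hp1p2M, hp2p2M, hp1Mp, hexpM, hsymm]
    have hApRev : A p = A (e, v) := by rw [hpdef, hedef]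
    have hRe : R e v = f p := rfl
    field_simp
    ring
  constructor
  · intro h ξ v hp
    have h0 := h (Real.exp ξ) v hp
    rw [key ξ v hp] at h0
    exact h0
  · intro h J v hJv
    have hJ : 0 < J := hUpos _ hJv
    have hJe : Real.exp (Real.log J) = J := Real.exp_log hJ
    have hp' : ((Real.exp (Real.log J), v) : ℝ × ℝ) ∈ U := by rw [hJe]; exact hJv
    have hk := key (Real.log J) v hp'
    rw [hJe] at hk
    rw [hk]
    exact h _ v hp'

end
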